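/- Let (K, ⟨−,−⟩, s) be an integral Serre lattice of surface type equipped with a codimension filtration (F¹, F²), let z ∈ F²K, and let (K̃, ⟨−,−⟩, s̃) be the numerical blowup of K at z. Then for every o ∈ K one has ⟨(s̃ − 1)o, (s̃ − 1)o⟩ = ⟨(s − 1)o, (s − 1)o⟩ + ⟨o, z⟩². In particular, for the degrees δ(K) := −⟨(s−1)o, (s−1)o⟩ and δ(K̃) := −⟨(s̃−1)o, (s̃−1)o⟩ computed from a structure element o (an element with K = ℤ·o ⊕ F¹K), one has δ(K̃) = δ(K) − ⟨o, z⟩². -/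

import Mathlib

open TensorProduct

variable {K : Type*} [AddCommGroup K]

/-- The blowup bilinear form on `K̃ = ℤ·f ⊕ K` (realized as `ℤ × K`, with `f = (1,0)`):
`⟨f,f⟩ = 1`, `⟨x,f⟩ = 0`, `⟨f,y⟩ = ⟨z,y⟩` for `x, y ∈ K`. -/
def blowupForm (B : K →ₗ[ℤ] K →ₗ[ℤ] ℤ) (z : K) :
    (ℤ × K) →ₗ[ℤ] (ℤ × K) →ₗ[ℤ] ℤ :=
  LinearMap.mk₂ ℤ (fun p q => p.1 * q.1 + p.1 * B z q.2 + B p.2 q.2)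
    (by intro p p' q; simp [add_mul]; ring)
    (by intro c p q; simp [smul_eq_mul]; ring)
    (by intro p q q'; simp [mul_add]; ring)
    (by intro c p q; simp [smul_eq_mul]; ring)

/-- The blowup Serre automorphism on `ℤ × K`: `s̃(f) = f + z`, `s̃(y) = s(y) − ⟨y,z⟩·f`. -/
def blowupAut (B : K →ₗ[ℤ] K →ₗ[ℤ] ℤ) (s : K →ₗ[ℤ] K) (z : K) :
    (ℤ × K) →ₗ[ℤ] (ℤ × K) where
  toFun p := (p.1 - B p.2 z, p.1 • z + s p.2)
  map_add' p q := by
    ext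
    · simp; ring
    · simp only [Prod.fst_add, Prod.snd_add, map_add, LinearMap.add_apply, add_smul,
        Prod.mk_add_mk]
      abel
  map_smul' c p := by
    ext
    · simp [smul_eq_mul]; ring
    · simp only [Prod.smul_fst, Prod.smul_snd, smul_eq_mul, map_smul, smul_add, mul_smul,
        RingHom.id_apply]

/-- An integral Serre lattice is of surface type if the base-changed automorphism
`s_ℚ` on `V := ℚ ⊗ K` is unipotent and `rank(s_ℚ − 1) ≤ 2`. -/
def IsSurfaceType {K : Type*} [AddCommGroup K] (s : K →ₗ[ℤ] K) : Prop :=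
  (LinearMap.baseChange ℚ s - 1) ^ (Module.finrank ℚ (ℚ ⊗[ℤ] K)) = 0 ∧
    Module.finrank ℚ (LinearMap.range (LinearMap.baseChange ℚ s - 1)) ≤ 2

/-- A codimension filtration on an integral Serre lattice of surface type: ℚ-subspaces
`F² ⊆ F¹` of `V = ℚ ⊗ K` with `(s−1)V ⊆ F¹`, `(s−1)F¹ ⊆ F²`, `(s−1)F² = 0`,
`dim F¹ = n − 1`, `dim F² = 1` and `⟨F¹, F²⟩ = 0`. -/
def IsCodimFiltration {K : Type*} [AddCommGroup K] (B : K →ₗ[ℤ] K →ₗ[ℤ] ℤ)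
    (s : K →ₗ[ℤ] K) (F1 F2 : Submodule ℚ (ℚ ⊗[ℤ] K)) : Prop :=
  F2 ≤ F1 ∧
    LinearMap.range (LinearMap.baseChange ℚ s - 1) ≤ F1 ∧
    Submodule.map (LinearMap.baseChange ℚ s - 1) F1 ≤ F2 ∧
    Submodule.map (LinearMap.baseChange ℚ s - 1) F2 = ⊥ ∧
    Module.finrank ℚ F1 = Module.finrank ℚ (ℚ ⊗[ℤ] K) - 1 ∧
    Module.finrank ℚ F2 = 1 ∧
    ∀ v ∈ F1, ∀ w ∈ F2, LinearMap.BilinForm.baseChange ℚ B v w = 0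

/-- in the numerical blowup `K̃` of `K` at `z ∈ F²K` one has
`⟨(s̃−1)o, (s̃−1)o⟩ = ⟨(s−1)o, (s−1)o⟩ + ⟨o,z⟩²` for every `o ∈ K`; in particular, for a
structure element `o` the degrees satisfy `δ(K̃) = δ(K) − ⟨o,z⟩²`. -/
theorem blowup_degree (K : Type*) [AddCommGroup K]
    [Module.Free ℤ K] [Module.Finite ℤ K]
    (B : K →ₗ[ℤ] K →ₗ[ℤ] ℤ) (hB : ∀ v, (∀ w, B v w = 0) → v = 0)
    (s : K →ₗ[ℤ] K) (hbij : Function.Bijective s)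
    (hserre : ∀ v w, B v (s w) = B w v)
    (hsurf : IsSurfaceType s)
    (F1 F2 : Submodule ℚ (ℚ ⊗[ℤ] K)) (hfil : IsCodimFiltration B s F1 F2)
    (z : K) (hz : (1 : ℚ) ⊗ₜ[ℤ] z ∈ F2) :
    (∀ o : K,
        blowupForm B z (blowupAut B s z (0, o) - (0, o)) (blowupAut B s z (0, o) - (0, o)) =
          B (s o - o) (s o - o) + (B o z) ^ 2) ∧
      ∀ o : K,
        IsCompl (Submodule.span ℤ {o})
          (Submodule.comap ((TensorProduct.mk ℤ ℚ K) 1) (F1.restrictScalars ℤ)) →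
        -(blowupForm B z (blowupAut B s z (0, o) - (0, o)) (blowupAut B s z (0, o) - (0, o))) =
          -(B (s o - o) (s o - o)) - (B o z) ^ 2 := by
  classical
  obtain ⟨hle, hr, h1, h2, _, _, horth⟩ := hfil
  -- injectivity of x ↦ 1 ⊗ x for free K
  have hinj : ∀ x : K, (1 : ℚ) ⊗ₜ[ℤ] x = 0 → x = 0 := by
    intro x hx
    let b := Module.Free.chooseBasis ℤ K
    have hrep : ∀ i, b.repr x i = 0 := by
      intro i
      have h2 := congrArg (fun f => (b.baseChange ℚ).repr f i) hx
      simp [Module.Basis.baseChange_repr_tmul] at h2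
      exact_mod_cast h2
    have hx0 : b.repr x = 0 := Finsupp.ext hrep
    simpa using congrArg b.repr.symm hx0
  -- s z = z
  have hsz : s z = z := by
    have hmem : (LinearMap.baseChange ℚ s - 1) ((1:ℚ) ⊗ₜ[ℤ] z) ∈
        Submodule.map (LinearMap.baseChange ℚ s - 1) F2 := ⟨_, hz, rfl⟩
    rw [h2, Submodule.mem_bot] at hmem
    have h0 : (1:ℚ) ⊗ₜ[ℤ] (s z - z) = 0 := by
      have h' : LinearMap.baseChange ℚ s ((1:ℚ) ⊗ₜ[ℤ] z) - (1:ℚ) ⊗ₜ[ℤ] z = 0 := hmem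
      rw [LinearMap.baseChange_tmul] at h'
      rw [TensorProduct.tmul_sub]
      exact h'
    exact sub_eq_zero.mp (hinj _ h0)
  have hkey : ∀ o : K, B z (s o - o) = 0 := by
    intro o
    have e1 : B z (s o) = B o z := hserre z o
    have e2 : B o z = B z o := by
      have := hserre o z
      rwa [hsz] at this
    rw [map_sub, e1, e2]
    ring
  have main : ∀ o : K,
      blowupForm B z (blowupAut B s z (0, o) - (0, o)) (blowupAut B s z (0, o) - (0, o)) =
        B (s o - o) (s o - o) + (B o z) ^ 2 := by
    intro o
    have hd : blowupAut B s z (0, o) - ((0 : ℤ), o) = (-(B o z), s o - o) := by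
      simp [blowupAut]
    rw [hd]
    have := hkey o
    simp only [blowupForm, LinearMap.mk₂_apply]
    rw [this]
    ring
  refine ⟨main, fun o _ => ?_⟩
  rw [main o]
  ring
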